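/- Bit-scanning meeting guarantee: consider two adjacent agents a, b with distinct identifiers where a's identifier is maximal. Each agent scans its identifier bits from position 0 to L−1; in the two rounds allocated to bit i, an agent moves out and back through its fixed port if its bit i is 1, and stays put both rounds if its bit i is 0. If a's fixed port leads to b's node, then there exists a round in which a is at b's node while b is also there (b stationary), i.e., the two agents meet. -/

import Mathlib

/-- Bit-scanning meeting guarantee: if agent a's identifier exceeds b's,
and a's fixed port leads to b's node, then a and b meet within 2L rounds. -/
theorem bit_scanning_meeting
    {Node : Type*} (na nb : Node) (L A B : ℕ)
    (hA : A < 2 ^ L) (hB : B < 2 ^ L) (hlt : B < A)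
    (posA posB : ℕ → Node)
    (hposA : ∀ i < L, (A.testBit i = true → posA (2 * i) = nb) ∧
      (A.testBit i = false → posA (2 * i) = na))
    (hposB : ∀ i < L, B.testBit i = false →
      posB (2 * i) = nb ∧ posB (2 * i + 1) = nb) :
    ∃ r < 2 * L, posA r = nb ∧ posB r = nb := by
  have hne : A ^^^ B ≠ 0 := Nat.xor_ne_zero_iff.2 hlt.ne'
  obtain ⟨i, hi, hi'⟩ := Nat.exists_most_significant_bit hne
  have hdiff : A.testBit i ≠ B.testBit i := by
    intro h
    rw [Nat.testBit_xor, h] at hi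
    simp at hi
  have hAi : A.testBit i = true := by
    by_contra hAi
    have hAi' : A.testBit i = false := by simpa using hAi
    have hBi : B.testBit i = true := by
      cases hb : B.testBit i
      · exact absurd (hAi'.trans hb.symm) hdiff
      · rfl
    have : A < B := Nat.lt_of_testBit i hAi' hBi (fun j hj => by
      have := hi' j hj
      rw [Nat.testBit_xor] at this
      simpa using this)
    omega
  have hBi : B.testBit i = false := by
    cases hb : B.testBit i
    · rfl
    · exact absurd (hAi.trans hb.symm) hdiff
  have hiL : i < L := by
    by_contra h
    push_neg at h
    have : A < 2 ^ i := lt_of_lt_of_le hA (Nat.pow_le_pow_right (by norm_num) h)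
    rw [Nat.testBit_eq_false_of_lt this] at hAi
    exact Bool.false_ne_true hAi
  exact ⟨2 * i, by omega, (hposA i hiL).1 hAi, (hposB i hiL hBi).1⟩
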